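/- For 0 ≤ ᾱ ≤ β ≤ 1 with β < (1+2ᾱ)/3, the region {(d₁,d₂) : d₁,d₂ ≥ 0, d₁ ≤ 1, d₂ ≤ 1, 2d₁+d₂ ≤ 2+ᾱ, 2d₂+d₁ ≤ 2+ᾱ, d₁+d₂ ≤ 1+β} equals the convex hull of the points (0,0), (0,1), (ᾱ,1), (2β−ᾱ, 1+ᾱ−β), (1+ᾱ−β, 2β−ᾱ), (1,ᾱ), (1,0). -/

import Mathlib

set_option maxHeartbeats 2000000

private lemma divnn {a b : ℝ} (ha : a ≤ 0) (hb : b ≤ 0) : 0 ≤ a / b :=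
  div_nonneg_iff.mpr (Or.inr ⟨ha, hb⟩)

private lemma mem3 {S : Set (ℝ × ℝ)} {u v w : ℝ × ℝ} (hu : u ∈ S) (hv : v ∈ S) (hw : w ∈ S)
    {p q r : ℝ} (hp : 0 ≤ p) (hq : 0 ≤ q) (hr : 0 ≤ r) (hs : p + q + r = 1) :
    p • u + q • v + r • w ∈ convexHull ℝ S := by
  have h := Finset.centerMass_mem_convexHull (t := (Finset.univ : Finset (Fin 3)))
    (w := ![p, q, r]) (z := ![u, v, w]) (fun i _ => by fin_cases i <;> assumption)
    (by simp [Fin.sum_univ_three, hs]) (fun i _ => by fin_cases i <;> assumption)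
  simpa [Finset.centerMass, Fin.sum_univ_three, hs] using h

theorem stmt_3 (a b : ℝ) (h0 : 0 ≤ a) (hab : a ≤ b) (hb1 : b ≤ 1)
    (hb : b < (1 + 2 * a) / 3) :
    {p : ℝ × ℝ | 0 ≤ p.1 ∧ 0 ≤ p.2 ∧ p.1 ≤ 1 ∧ p.2 ≤ 1 ∧
      2 * p.1 + p.2 ≤ 2 + a ∧ 2 * p.2 + p.1 ≤ 2 + a ∧ p.1 + p.2 ≤ 1 + b} =
    convexHull ℝ ({(0, 0), (0, 1), (a, 1), (2 * b - a, 1 + a - b),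
      (1 + a - b, 2 * b - a), (1, a), (1, 0)} : Set (ℝ × ℝ)) := by
  have hb' : 3 * b < 1 + 2 * a := by linarith
  have ha1 : a < 1 := by linarith
  have h2a : (0:ℝ) < 2 + a := by linarith
  have h1b : (0:ℝ) < 1 + b := by linarith
  set S : Set (ℝ × ℝ) := {(0, 0), (0, 1), (a, 1), (2 * b - a, 1 + a - b),
      (1 + a - b, 2 * b - a), (1, a), (1, 0)} with hSdef
  have hm0 : ((0:ℝ), (0:ℝ)) ∈ S := Set.mem_insert _ _
  have hmA : ((0:ℝ), (1:ℝ)) ∈ S := Set.mem_insert_of_mem _ (Set.mem_insert _ _)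
  have hmB : ((a, (1:ℝ)) : ℝ × ℝ) ∈ S :=
    Set.mem_insert_of_mem _ (Set.mem_insert_of_mem _ (Set.mem_insert _ _))
  have hmC : ((2 * b - a, 1 + a - b) : ℝ × ℝ) ∈ S :=
    Set.mem_insert_of_mem _ (Set.mem_insert_of_mem _
      (Set.mem_insert_of_mem _ (Set.mem_insert _ _)))
  have hmD : ((1 + a - b, 2 * b - a) : ℝ × ℝ) ∈ S :=
    Set.mem_insert_of_mem _ (Set.mem_insert_of_mem _ (Set.mem_insert_of_mem _
      (Set.mem_insert_of_mem _ (Set.mem_insert _ _))))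
  have hmE : (((1:ℝ), a) : ℝ × ℝ) ∈ S :=
    Set.mem_insert_of_mem _ (Set.mem_insert_of_mem _ (Set.mem_insert_of_mem _
      (Set.mem_insert_of_mem _ (Set.mem_insert_of_mem _ (Set.mem_insert _ _)))))
  have hmF : (((1:ℝ), (0:ℝ)) : ℝ × ℝ) ∈ S :=
    Set.mem_insert_of_mem _ (Set.mem_insert_of_mem _ (Set.mem_insert_of_mem _
      (Set.mem_insert_of_mem _ (Set.mem_insert_of_mem _ (Set.mem_insert_of_mem _ rfl)))))
  apply Set.Subset.antisymm
  · rintro ⟨x, y⟩ hp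
    simp only [Set.mem_setOf_eq] at hp
    obtain ⟨hx0, hy0, hx1, hy1, hXA, hYA, hSB⟩ := hp
    rcases le_total (x - a * y) 0 with c1 | c1
    · -- triangle O, A, B
      rcases eq_or_lt_of_le h0 with ha0 | ha0
      · have hx : x = 0 := le_antisymm (by nlinarith) hx0
        have hpe : ((x, y) : ℝ × ℝ) =
            y • ((0:ℝ), (1:ℝ)) + (0:ℝ) • ((a, (1:ℝ)) : ℝ × ℝ) + (1 - y) • ((0:ℝ), (0:ℝ)) := by
          simp [Prod.ext_iff, hx]
        rw [hpe]
        exact mem3 hmA hmB hm0 hy0 le_rfl (by linarith) (by ring)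
      · have hpe : ((x, y) : ℝ × ℝ) =
            (y - x / a) • ((0:ℝ), (1:ℝ)) + (x / a) • ((a, (1:ℝ)) : ℝ × ℝ)
              + (1 - y) • ((0:ℝ), (0:ℝ)) := by
          have : a ≠ 0 := ne_of_gt ha0
          simp only [Prod.smul_mk, Prod.mk_add_mk, Prod.mk.injEq, smul_eq_mul]
          constructor <;> field_simp <;> ring
        rw [hpe]
        refine mem3 hmA hmB hm0 ?_ (div_nonneg hx0 h0) (by linarith) (by ring)
        have : x / a ≤ y := (div_le_iff₀ ha0).mpr (by nlinarith)
        linarith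
    · rcases le_total ((1 + a - b) * x - (2 * b - a) * y) 0 with c2 | c2
      · -- triangle O, B, C
        rcases eq_or_lt_of_le hab with hab0 | hab0
        · -- a = b : point lies on ray to B
          have hx : x = a * y := by nlinarith
          have hpe : ((x, y) : ℝ × ℝ) =
              y • ((a, (1:ℝ)) : ℝ × ℝ) + (0:ℝ) • ((2 * b - a, 1 + a - b) : ℝ × ℝ)
                + (1 - y) • ((0:ℝ), (0:ℝ)) := by
            simp [Prod.ext_iff, hx, mul_comm]
          rw [hpe]
          exact mem3 hmB hmC hm0 hy0 le_rfl (by linarith) (by ring)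
        · set d : ℝ := (a - b) * (2 + a) with hd
          have hdneg : d < 0 := by nlinarith
          have hdne : d ≠ 0 := ne_of_lt hdneg
          set lB : ℝ := ((1 + a - b) * x - (2 * b - a) * y) / d with hlB
          set lC : ℝ := (a * y - x) / d with hlC
          have hB0 : 0 ≤ lB := divnn c2 (le_of_lt hdneg)
          have hC0 : 0 ≤ lC := divnn (by linarith) (le_of_lt hdneg)
          have hsum : lB + lC = (2 * y + x) / (2 + a) := by
            rw [hlB, hlC, hd, ← add_div, div_eq_div_iff hdne (ne_of_gt h2a)]
            ring
          have hO0 : 0 ≤ 1 - lB - lC := by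
            have : (2 * y + x) / (2 + a) ≤ 1 := (div_le_one h2a).mpr (by linarith)
            linarith
          have hpe : ((x, y) : ℝ × ℝ) =
              lB • ((a, (1:ℝ)) : ℝ × ℝ) + lC • ((2 * b - a, 1 + a - b) : ℝ × ℝ)
                + (1 - lB - lC) • ((0:ℝ), (0:ℝ)) := by
            simp only [Prod.smul_mk, Prod.mk_add_mk, Prod.mk.injEq, smul_eq_mul, hlB, hlC, hd]
            constructor <;> (field_simp [(sub_neg.mpr hab0).ne]; ring)
          rw [hpe]
          exact mem3 hmB hmC hm0 hB0 hC0 hO0 (by ring)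
      · rcases le_total ((2 * b - a) * x - (1 + a - b) * y) 0 with c3 | c3
        · -- triangle O, C, D
          set d : ℝ := (3 * b - 1 - 2 * a) * (1 + b) with hd
          have hdneg : d < 0 := by nlinarith
          have hdne : d ≠ 0 := ne_of_lt hdneg
          set lC : ℝ := ((2 * b - a) * x - (1 + a - b) * y) / d with hlC
          set lD : ℝ := ((2 * b - a) * y - (1 + a - b) * x) / d with hlD
          have hC0 : 0 ≤ lC := divnn c3 (le_of_lt hdneg)
          have hD0 : 0 ≤ lD := divnn (by linarith) (le_of_lt hdneg)
          have hsum : lC + lD = (x + y) / (1 + b) := by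
            rw [hlC, hlD, hd, ← add_div, div_eq_div_iff hdne (ne_of_gt h1b)]
            ring
          have hO0 : 0 ≤ 1 - lC - lD := by
            have : (x + y) / (1 + b) ≤ 1 := (div_le_one h1b).mpr (by linarith)
            linarith
          have hpe : ((x, y) : ℝ × ℝ) =
              lC • ((2 * b - a, 1 + a - b) : ℝ × ℝ) + lD • ((1 + a - b, 2 * b - a) : ℝ × ℝ)
                + (1 - lC - lD) • ((0:ℝ), (0:ℝ)) := by
            simp only [Prod.smul_mk, Prod.mk_add_mk, Prod.mk.injEq, smul_eq_mul, hlC, hlD, hd]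
            constructor <;> (field_simp [(by linarith : 3 * b - 1 - 2 * a < 0).ne, (by linarith : b * 3 - 1 - 2 * a < 0).ne, h1b.ne']; ring)
          rw [hpe]
          exact mem3 hmC hmD hm0 hC0 hD0 hO0 (by ring)
        · rcases le_total (a * x - y) 0 with c4 | c4
          · -- triangle O, D, E
            rcases eq_or_lt_of_le hab with hab0 | hab0
            · have hy : y = a * x := by nlinarith
              have hpe : ((x, y) : ℝ × ℝ) =
                  x • (((1:ℝ), a) : ℝ × ℝ) + (0:ℝ) • ((1 + a - b, 2 * b - a) : ℝ × ℝ)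
                    + (1 - x) • ((0:ℝ), (0:ℝ)) := by
                simp [Prod.ext_iff, hy, mul_comm]
              rw [hpe]
              exact mem3 hmE hmD hm0 hx0 le_rfl (by linarith) (by ring)
            · set d : ℝ := (a - b) * (2 + a) with hd
              have hdneg : d < 0 := by nlinarith
              have hdne : d ≠ 0 := ne_of_lt hdneg
              set lD : ℝ := (a * x - y) / d with hlD
              set lE : ℝ := ((1 + a - b) * y - (2 * b - a) * x) / d with hlE
              have hD0 : 0 ≤ lD := divnn c4 (le_of_lt hdneg)
              have hE0 : 0 ≤ lE := divnn (by linarith) (le_of_lt hdneg)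
              have hsum : lD + lE = (2 * x + y) / (2 + a) := by
                rw [hlD, hlE, hd, ← add_div, div_eq_div_iff hdne (ne_of_gt h2a)]
                ring
              have hO0 : 0 ≤ 1 - lD - lE := by
                have : (2 * x + y) / (2 + a) ≤ 1 := (div_le_one h2a).mpr (by linarith)
                linarith
              have hpe : ((x, y) : ℝ × ℝ) =
                  lD • ((1 + a - b, 2 * b - a) : ℝ × ℝ) + lE • (((1:ℝ), a) : ℝ × ℝ)
                    + (1 - lD - lE) • ((0:ℝ), (0:ℝ)) := by
                simp only [Prod.smul_mk, Prod.mk_add_mk, Prod.mk.injEq, smul_eq_mul, hlD, hlE, hd]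
                constructor <;> (field_simp [(sub_neg.mpr hab0).ne]; ring)
              rw [hpe]
              exact mem3 hmD hmE hm0 hD0 hE0 hO0 (by ring)
          · -- triangle O, E, F
            rcases eq_or_lt_of_le h0 with ha0 | ha0
            · have hy : y = 0 := le_antisymm (by nlinarith) hy0
              have hpe : ((x, y) : ℝ × ℝ) =
                  (0:ℝ) • (((1:ℝ), a) : ℝ × ℝ) + x • (((1:ℝ), (0:ℝ)) : ℝ × ℝ)
                    + (1 - x) • ((0:ℝ), (0:ℝ)) := by
                simp [Prod.ext_iff, hy]
              rw [hpe]
              exact mem3 hmE hmF hm0 le_rfl hx0 (by linarith) (by ring)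
            · have hane : a ≠ 0 := ne_of_gt ha0
              have hpe : ((x, y) : ℝ × ℝ) =
                  (y / a) • (((1:ℝ), a) : ℝ × ℝ) + (x - y / a) • (((1:ℝ), (0:ℝ)) : ℝ × ℝ)
                    + (1 - x) • ((0:ℝ), (0:ℝ)) := by
                simp only [Prod.smul_mk, Prod.mk_add_mk, Prod.mk.injEq, smul_eq_mul]
                constructor <;> field_simp <;> ring
              rw [hpe]
              refine mem3 hmE hmF hm0 (div_nonneg hy0 h0) ?_ (by linarith) (by ring)
              have : y / a ≤ x := (div_le_iff₀ ha0).mpr (by nlinarith)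
              linarith
  · apply convexHull_min
    · rintro z hz
      simp only [hSdef, Set.mem_insert_iff, Set.mem_singleton_iff] at hz
      rcases hz with rfl | rfl | rfl | rfl | rfl | rfl | rfl <;>
        refine ⟨?_, ?_, ?_, ?_, ?_, ?_, ?_⟩ <;> dsimp only <;> linarith
    · intro u hu v hv s t hs ht hst
      simp only [Set.mem_setOf_eq] at hu hv ⊢
      obtain ⟨hu1, hu2, hu3, hu4, hu5, hu6, hu7⟩ := hu
      obtain ⟨hv1, hv2, hv3, hv4, hv5, hv6, hv7⟩ := hv
      simp only [Prod.fst_add, Prod.snd_add, Prod.smul_fst, Prod.smul_snd, smul_eq_mul]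
      refine ⟨by nlinarith, by nlinarith, by nlinarith, by nlinarith, by nlinarith,
        by nlinarith, by nlinarith⟩
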